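/- Let ε ∈ (0,1], let k, n ∈ ℕ with 1 ≤ k ≤ n, and let s, ŝ ∈ [0,1]^n with 0 ≤ ŝ_i − s_i ≤ ε for all i. Let x, y ≥ 0, define p_i = max(s_i − x, 0) and q_i = max(ŝ_i − y, 0), and assume ∑_{i=1}^n p_i = ∑_{i=1}^n q_i = k. Then ∑_{i=1}^n q_i s_i ≥ ∑_{i=1}^n p_i s_i − k(ε + 2√ε). -/
import Mathlib


/-- Utility loss from rounding, downward case: the linear utility (w.r.t. the
original scores `s`) of the downward water-filling solution for the rounded scores
`shat` is within `k(ε + 2√ε)` of that of the water-filling solution for `s`. -/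
theorem waterfill_down_utility_loss (ε : ℝ) (hε : 0 < ε) (hε1 : ε ≤ 1)
    (k n : ℕ) (hk : 1 ≤ k) (hkn : k ≤ n)
    (s shat : Fin n → ℝ) (hs : ∀ i, 0 ≤ s i ∧ s i ≤ 1)
    (hshat : ∀ i, 0 ≤ shat i ∧ shat i ≤ 1)
    (hround : ∀ i, 0 ≤ shat i - s i ∧ shat i - s i ≤ ε)
    (x y : ℝ) (hx : 0 ≤ x) (hy : 0 ≤ y)
    (p q : Fin n → ℝ) (hp : ∀ i, p i = max (s i - x) 0)
    (hq : ∀ i, q i = max (shat i - y) 0)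
    (hpk : ∑ i, p i = k) (hqk : ∑ i, q i = k) :
    ∑ i, q i * s i ≥ ∑ i, p i * s i - k * (ε + 2 * Real.sqrt ε) := by
  have hk0 : (0:ℝ) ≤ (k:ℝ) := Nat.cast_nonneg k
  have hsq : ε ≤ Real.sqrt ε := by
    nlinarith [Real.sq_sqrt hε.le, Real.sqrt_nonneg ε]
  have hp0 : ∀ i, 0 ≤ p i := fun i => by rw [hp]; exact le_max_right _ _
  have hq0 : ∀ i, 0 ≤ q i := fun i => by rw [hq]; exact le_max_right _ _
  rcases le_or_gt y x with hyx | hxy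
  · -- y ≤ x : q ≥ p pointwise, utility only goes up
    have hqp : ∀ i, p i ≤ q i := by
      intro i; rw [hp, hq]
      exact max_le_max (by linarith [(hround i).1]) le_rfl
    have h1 : ∑ i, p i * s i ≤ ∑ i, q i * s i :=
      Finset.sum_le_sum fun i _ => mul_le_mul_of_nonneg_right (hqp i) (hs i).1
    nlinarith [Real.sqrt_nonneg ε]
  rcases le_or_gt y (x + ε) with hyxe | hyxe
  · -- main case : x < y ≤ x + ε
    have key : ∀ i, (p i - q i) * (s i - x) ≤ ε * p i + ε * max (q i - p i) 0 := by
      intro i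
      rcases le_or_gt (p i) (q i) with h | h
      · have hm : max (q i - p i) 0 = q i - p i := max_eq_left (by linarith)
        rw [hm]
        rcases le_or_gt (q i) 0 with hq0' | hq0'
        · have hqz : q i = 0 := le_antisymm hq0' (hq0 i)
          have hpz : p i = 0 := le_antisymm (by linarith) (hp0 i)
          simp [hqz, hpz]
        · have hqe : q i = shat i - y := by
            rw [hq] at hq0' ⊢
            rcases max_cases (shat i - y) 0 with ⟨h1, h2⟩ | ⟨h1, h2⟩ <;> linarith
          have hsx : q i - ε ≤ s i - x := by
            have h2 := (hround i).2
            linarith [hxy.le]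
          nlinarith [mul_nonneg (sub_nonneg.mpr h) (sub_nonneg.mpr hsx),
            mul_nonneg (sub_nonneg.mpr h) (hq0 i), mul_nonneg hε.le (hp0 i)]
      · have hm : max (q i - p i) 0 = 0 := max_eq_right (by linarith)
        rw [hm]
        have hpe : p i = s i - x := by
          rw [hp] at h ⊢
          rcases max_cases (s i - x) 0 with ⟨h1, h2⟩ | ⟨h1, h2⟩ <;> linarith [hq0 i]
        have hqge : p i - ε ≤ q i := by
          rw [hq]
          have h2 : s i - x - ε ≤ shat i - y := by linarith [(hround i).1]
          calc p i - ε = s i - x - ε := by rw [hpe]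
            _ ≤ shat i - y := h2
            _ ≤ max (shat i - y) 0 := le_max_left _ _
        nlinarith [mul_nonneg (by linarith : (0:ℝ) ≤ ε - (p i - q i)) (hp0 i)]
    have hsum0 : ∑ i, (p i - q i) = 0 := by
      rw [Finset.sum_sub_distrib, hpk, hqk]; ring
    have hT : ∑ i, max (q i - p i) 0 ≤ (k:ℝ) := by
      have h1 : ∑ i, max (q i - p i) 0 = ∑ i, max (p i - q i) 0 - ∑ i, (p i - q i) := by
        rw [← Finset.sum_sub_distrib]
        apply Finset.sum_congr rfl
        intro i _
        rcases le_total (p i) (q i) with h | h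
        · rw [max_eq_left (by linarith), max_eq_right (by linarith)]; ring
        · rw [max_eq_right (by linarith), max_eq_left (by linarith)]; ring
      rw [h1, hsum0, sub_zero, ← hpk]
      exact Finset.sum_le_sum fun i _ => max_le (by linarith [hq0 i]) (hp0 i)
    have h1 : ∑ i, (p i - q i) * (s i - x)
        = ∑ i, p i * s i - ∑ i, q i * s i - x * ∑ i, (p i - q i) := by
      rw [Finset.mul_sum, ← Finset.sum_sub_distrib, ← Finset.sum_sub_distrib]
      apply Finset.sum_congr rfl
      intro i _; ring
    have h2 : ∑ i, (p i - q i) * (s i - x)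
        ≤ ∑ i, (ε * p i + ε * max (q i - p i) 0) :=
      Finset.sum_le_sum fun i _ => key i
    have h3 : ∑ i, (ε * p i + ε * max (q i - p i) 0)
        = ε * (k:ℝ) + ε * ∑ i, max (q i - p i) 0 := by
      rw [Finset.sum_add_distrib, ← Finset.mul_sum, ← Finset.mul_sum, hpk]
    rw [hsum0, mul_zero, sub_zero] at h1
    rw [h1, h3] at h2
    nlinarith [mul_le_mul_of_nonneg_right hsq hk0, mul_le_mul_of_nonneg_left hT hε.le]
  · -- y > x + ε : p ≥ q pointwise, equal sums force p = q
    have hqp : ∀ i ∈ Finset.univ, q i ≤ p i := by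
      intro i _; rw [hp, hq]
      exact max_le_max (by linarith [(hround i).2]) le_rfl
    have heq : ∀ i ∈ Finset.univ, q i = p i :=
      (Finset.sum_eq_sum_iff_of_le hqp).mp (by rw [hpk, hqk])
    have h1 : ∑ i, q i * s i = ∑ i, p i * s i :=
      Finset.sum_congr rfl fun i hi => by rw [heq i hi]
    nlinarith [Real.sqrt_nonneg ε]
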